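/- Let T(t,s) be a linear evolution operator on a normed space admitting an exponential dichotomy with projections P(t) on an interval J, and suppose u : J → X is a solution (u(t) = T(t,s)u(s) for t ≥ s in J) with J unbounded above and sup_{t∈J} ‖u(t)‖ < ∞. Then P(t)u(t) = 0 for all t ∈ J, i.e., u(t) ∈ Ran(I − P(t)), and consequently ‖u(t)‖ ≤ M e^{−γ(t−s)} ‖u(s)‖ for t ≥ s in J. -/

import Mathlib

open Set

/-- An exponential dichotomy with constants `M, γ` on an interval `J` for a linear
evolution operator `T(t,s)` (`t ≥ s`), as in Definition 2.2 of the paper; the backward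
estimate `‖T(t,s)P(s)‖ ≤ M e^{γ(t-s)}` for `t < s` is written as the equivalent lower
bound `growth` (plus the uniform bound `bound_proj` on the projections, its value at
`t = s`). -/
structure ExpDichotomy {E : Type*} [NormedAddCommGroup E] [NormedSpace ℝ E]
    (T : ℝ → ℝ → E →L[ℝ] E) (J : Set ℝ) (P : ℝ → E →L[ℝ] E) (M γ : ℝ) : Prop where
  hM : 0 < M
  hγ : 0 < γ
  proj : ∀ t ∈ J, ∀ x, P t (P t x) = P t x
  comm : ∀ s ∈ J, ∀ t ∈ J, s ≤ t → ∀ x, T t s (P s x) = P t (T t s x)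
  iso : ∀ s ∈ J, ∀ t ∈ J, s ≤ t → Set.BijOn (T t s) (Set.range (P s)) (Set.range (P t))
  bound_proj : ∀ t ∈ J, ∀ x, ‖P t x‖ ≤ M * ‖x‖
  decay : ∀ s ∈ J, ∀ t ∈ J, s ≤ t → ∀ x,
    ‖T t s (x - P s x)‖ ≤ M * Real.exp (-γ * (t - s)) * ‖x‖
  growth : ∀ s ∈ J, ∀ t ∈ J, s ≤ t → ∀ x,
    ‖P s x‖ ≤ M * Real.exp (-γ * (t - s)) * ‖T t s (P s x)‖

/-- Let `T(t,s)` be a linear evolution operator on a normed space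
admitting an exponential dichotomy with projections `P(t)` on an interval `J` unbounded
above, and let `u : J → X` be a bounded solution (`u(t) = T(t,s)u(s)` for `s ≤ t` in
`J`).  Then `P(t)u(t) = 0` for all `t ∈ J`, i.e. `u(t) ∈ Ran(I − P(t))`, and
consequently `‖u t‖ ≤ M e^{−γ(t−s)} ‖u s‖` for `s ≤ t` in `J`. -/
theorem stmt15 {E : Type*} [NormedAddCommGroup E] [NormedSpace ℝ E]
    (T : ℝ → ℝ → E →L[ℝ] E)
    (hT : ∀ r t s : ℝ, s ≤ t → t ≤ r → ∀ x, T r t (T t s x) = T r s x)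
    (J : Set ℝ) (hJ : J.OrdConnected) (hJub : ∀ a : ℝ, ∃ t ∈ J, a ≤ t)
    (P : ℝ → E →L[ℝ] E) (M γ : ℝ)
    (hdich : ExpDichotomy T J P M γ)
    (u : ℝ → E)
    (hsol : ∀ s ∈ J, ∀ t ∈ J, s ≤ t → u t = T t s (u s))
    (C : ℝ) (hbdd : ∀ t ∈ J, ‖u t‖ ≤ C) :
    (∀ t ∈ J, P t (u t) = 0) ∧
    (∀ s ∈ J, ∀ t ∈ J, s ≤ t → ‖u t‖ ≤ M * Real.exp (-γ * (t - s)) * ‖u s‖) := by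
  obtain ⟨hM, hγ, proj, comm, iso, bound_proj, decay, growth⟩ := hdich
  have hzero : ∀ t ∈ J, P t (u t) = 0 := by
    intro t ht
    by_contra hne
    have ha : (0 : ℝ) < ‖P t (u t)‖ := norm_pos_iff.mpr hne
    set a := ‖P t (u t)‖ with ha_def
    have hC : 0 < C := by
      rcases lt_or_ge 0 C with h | h
      · exact h
      · exfalso
        have hu0 : u t = 0 := by
          have := hbdd t ht
          have : ‖u t‖ ≤ 0 := this.trans h
          simpa using le_antisymm this (norm_nonneg _)
        apply hne
        rw [hu0]; simp
    -- key estimate for any r ∈ J with t ≤ r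
    have key : ∀ r ∈ J, t ≤ r → a ≤ M * Real.exp (-γ * (r - t)) * (M * C) := by
      intro r hr htr
      have h1 := growth t ht r hr htr (u t)
      have h2 : T r t (P t (u t)) = P r (u r) := by
        rw [comm t ht r hr htr (u t), ← hsol t ht r hr htr]
      rw [h2] at h1
      have h3 : ‖P r (u r)‖ ≤ M * C := by
        calc ‖P r (u r)‖ ≤ M * ‖u r‖ := bound_proj r hr (u r)
          _ ≤ M * C := by
            exact mul_le_mul_of_nonneg_left (hbdd r hr) hM.le
      calc a ≤ M * Real.exp (-γ * (r - t)) * ‖P r (u r)‖ := h1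
        _ ≤ M * Real.exp (-γ * (r - t)) * (M * C) := by
          apply mul_le_mul_of_nonneg_left h3
          positivity
    -- choose r large
    obtain ⟨r, hr, hrge⟩ := hJub (max t (t + (Real.log (M * M * C / a) + 1) / γ))
    have htr : t ≤ r := le_trans (le_max_left _ _) hrge
    have hkey := key r hr htr
    have hexp : Real.exp (-γ * (r - t)) < a / (M * M * C) := by
      have hge : t + (Real.log (M * M * C / a) + 1) / γ ≤ r :=
        le_trans (le_max_right _ _) hrge
      have h1 : Real.log (M * M * C / a) + 1 ≤ γ * (r - t) := by
        have h0 : (Real.log (M * M * C / a) + 1) / γ ≤ r - t := by linarith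
        have := (div_le_iff₀ hγ).mp h0
        linarith [this, mul_comm (r - t) γ]
      have h2 : -γ * (r - t) < Real.log (a / (M * M * C)) := by
        have : Real.log (a / (M * M * C)) = -Real.log (M * M * C / a) := by
          rw [← Real.log_inv]
          congr 1
          field_simp
        rw [this]; linarith
      calc Real.exp (-γ * (r - t)) < Real.exp (Real.log (a / (M * M * C))) :=
            Real.exp_lt_exp.mpr h2
        _ = a / (M * M * C) := Real.exp_log (by positivity)
    have : M * Real.exp (-γ * (r - t)) * (M * C) < a := by
      have hMC : (0 : ℝ) < M * M * C := by positivity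
      calc M * Real.exp (-γ * (r - t)) * (M * C)
          < M * (a / (M * M * C)) * (M * C) := by
            apply mul_lt_mul_of_pos_right _ (by positivity)
            exact mul_lt_mul_of_pos_left hexp hM
        _ = a := by field_simp
    linarith
  refine ⟨hzero, fun s hs t ht hst => ?_⟩
  have h1 : u t = T t s (u s - P s (u s)) := by
    rw [hzero s hs, sub_zero]; exact hsol s hs t ht hst
  rw [h1]
  exact decay s hs t ht hst (u s)
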